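/- Centered leverage score decay: let v_i = √(q_i)(φ_i - φ̄) with q_i ≥ q_min > 0 and ‖v_i‖² ≤ L for all candidates i; let H_n = γI + α Σ_{t=1}^n v_{i_t} v_{i_t}^⊤ be built greedily with α, γ > 0, and suppose (diversity) v_i^⊤ H_{k-1}^{-1} v_i ≤ κ · v_{i_k}^⊤ H_{k-1}^{-1} v_{i_k} for all i and all k, and (Fisher compatibility) Σ_n ⪰ ρ H_n for some ρ ∈ (0,1] with Σ_n positive definite. Then for every candidate i, (φ_i - φ̄)^⊤ Σ_n^{-1} (φ_i - φ̄) ≤ (κ/(ρ q_min)) · ((1 + αL/γ)/α) · (d/n) · log(1 + α n L/(γ d)). -/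

import Mathlib

open scoped Matrix

open Finset

set_option linter.unusedSectionVars false
section Aux

variable {m : Type*} [Fintype m] [DecidableEq m]

lemma aux_vecMulVec_mulVec (w x : m → ℝ) :
    Matrix.vecMulVec w w *ᵥ x = (w ⬝ᵥ x) • w := by
  ext i
  simp [Matrix.vecMulVec, Matrix.mulVec, dotProduct, Finset.mul_sum, mul_comm, mul_assoc,
    mul_left_comm]

lemma aux_quad_vecMulVec (w x : m → ℝ) :
    x ⬝ᵥ Matrix.vecMulVec w w *ᵥ x = (w ⬝ᵥ x) ^ 2 := by
  rw [aux_vecMulVec_mulVec, dotProduct_smul]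
  rw [show x ⬝ᵥ w = w ⬝ᵥ x from dotProduct_comm x w]
  ring_nf

lemma aux_psd_vecMulVec (w : m → ℝ) : (Matrix.vecMulVec w w).PosSemidef := by
  refine Matrix.PosSemidef.of_dotProduct_mulVec_nonneg ?_ ?_
  · ext i j; simp [Matrix.vecMulVec, Matrix.conjTranspose, mul_comm]
  · intro x
    simp only [star_trivial]
    rw [aux_quad_vecMulVec]
    positivity

lemma aux_psd_smul {α : ℝ} (hα : 0 ≤ α) {A : Matrix m m ℝ} (hA : A.PosSemidef) :
    (α • A).PosSemidef := by
  refine Matrix.PosSemidef.of_dotProduct_mulVec_nonneg ?_ ?_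
  · show (α • A)ᴴ = α • A
    rw [Matrix.conjTranspose_smul, hA.isHermitian.eq]
    simp
  · intro x
    have := hA.dotProduct_mulVec_nonneg x
    simp only [Matrix.smul_mulVec, dotProduct_smul, smul_eq_mul, star_trivial] at *
    positivity

lemma aux_dot_symm {A : Matrix m m ℝ} (hA : A.IsHermitian) (x y : m → ℝ) :
    x ⬝ᵥ A *ᵥ y = y ⬝ᵥ A *ᵥ x := by
  rw [Matrix.dotProduct_mulVec, ← Matrix.mulVec_transpose]
  rw [show Aᵀ = A from hA]
  exact dotProduct_comm _ _

lemma aux_key {A : Matrix m m ℝ} (hA : A.PosDef) (x b : m → ℝ) :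
    2 * (x ⬝ᵥ b) - x ⬝ᵥ A *ᵥ x ≤ b ⬝ᵥ A⁻¹ *ᵥ b := by
  set u := A⁻¹ *ᵥ b with hudef
  have hu : A *ᵥ u = b := by
    rw [hudef, Matrix.mulVec_mulVec, Matrix.mul_nonsing_inv _ hA.det_pos.ne'.isUnit,
      Matrix.one_mulVec]
  have h0 : 0 ≤ (x - u) ⬝ᵥ A *ᵥ (x - u) := by
    simpa using hA.posSemidef.dotProduct_mulVec_nonneg (x - u)
  have hexp : (x - u) ⬝ᵥ A *ᵥ (x - u)
      = x ⬝ᵥ A *ᵥ x - 2 * (x ⬝ᵥ b) + b ⬝ᵥ A⁻¹ *ᵥ b := by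
    have h1 : x ⬝ᵥ A *ᵥ u = x ⬝ᵥ b := by rw [hu]
    have h2 : u ⬝ᵥ A *ᵥ x = x ⬝ᵥ b := by rw [aux_dot_symm hA.isHermitian, hu]
    have h3 : u ⬝ᵥ A *ᵥ u = b ⬝ᵥ A⁻¹ *ᵥ b := by
      rw [hu, hudef, dotProduct_comm]
    rw [sub_dotProduct, Matrix.mulVec_sub, dotProduct_sub,
      dotProduct_sub, h1, h2, h3]
    ring
  linarith

lemma aux_inv_quad_eq {A : Matrix m m ℝ} (hA : A.PosDef) (b : m → ℝ) :
    b ⬝ᵥ A⁻¹ *ᵥ b = 2 * ((A⁻¹ *ᵥ b) ⬝ᵥ b) - (A⁻¹ *ᵥ b) ⬝ᵥ A *ᵥ (A⁻¹ *ᵥ b) := by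
  have hu : A *ᵥ (A⁻¹ *ᵥ b) = b := by
    rw [Matrix.mulVec_mulVec, Matrix.mul_nonsing_inv _ hA.det_pos.ne'.isUnit, Matrix.one_mulVec]
  rw [hu, dotProduct_comm b]
  ring

lemma aux_inv_mono {A B : Matrix m m ℝ} (hA : A.PosDef) (hB : B.PosDef)
    (hAB : (B - A).PosSemidef) (b : m → ℝ) :
    b ⬝ᵥ B⁻¹ *ᵥ b ≤ b ⬝ᵥ A⁻¹ *ᵥ b := by
  set x := B⁻¹ *ᵥ b with hx
  have h0 : 0 ≤ x ⬝ᵥ (B - A) *ᵥ x := by simpa using hAB.dotProduct_mulVec_nonneg x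
  have h1 : x ⬝ᵥ (B - A) *ᵥ x = x ⬝ᵥ B *ᵥ x - x ⬝ᵥ A *ᵥ x := by
    rw [Matrix.sub_mulVec, dotProduct_sub]
  have h2 := aux_key hA x b
  have heq := aux_inv_quad_eq hB b
  rw [← hx] at heq
  linarith

lemma aux_quad_nonneg {A : Matrix m m ℝ} (hA : A.PosSemidef) (b : m → ℝ) :
    0 ≤ b ⬝ᵥ A *ᵥ b := by simpa using hA.dotProduct_mulVec_nonneg b

lemma aux_smul_one_posDef {γ : ℝ} (hγ : 0 < γ) :
    (γ • (1 : Matrix m m ℝ)).PosDef := by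
  rw [show γ • (1 : Matrix m m ℝ) = Matrix.diagonal (fun _ => γ) by
    ext i j; by_cases h : i = j <;> simp [Matrix.one_apply, Matrix.diagonal, h]]
  exact Matrix.posDef_diagonal_iff.mpr fun _ => hγ

lemma aux_smul_posDef {γ : ℝ} (hγ : 0 < γ) {A : Matrix m m ℝ} (hA : A.PosDef) :
    (γ • A).PosDef := by
  refine Matrix.PosDef.of_dotProduct_mulVec_pos ?_ ?_
  · show (γ • A)ᴴ = γ • A
    rw [Matrix.conjTranspose_smul, hA.isHermitian.eq]
    simp
  · intro x hx
    have := hA.dotProduct_mulVec_pos hx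
    simp only [Matrix.smul_mulVec, dotProduct_smul, smul_eq_mul] at *
    positivity

lemma aux_smul_inv {γ : ℝ} (hγ : 0 < γ) {A : Matrix m m ℝ} (hA : A.PosDef) :
    (γ • A)⁻¹ = γ⁻¹ • A⁻¹ := by
  haveI : Invertible γ := invertibleOfNonzero hγ.ne'
  have h := Matrix.inv_smul (A := A) γ hA.det_pos.ne'.isUnit
  rwa [invOf_eq_inv] at h

lemma aux_smul_vecMulVec (α : ℝ) (w : m → ℝ) :
    α • Matrix.vecMulVec w w = Matrix.vecMulVec (α • w) w := by
  ext i j; simp [Matrix.vecMulVec, mul_assoc]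

lemma aux_det_rank_one {A : Matrix m m ℝ} (hA : A.PosDef) (α : ℝ) (w : m → ℝ) :
    (A + α • Matrix.vecMulVec w w).det
      = A.det * (1 + α * (w ⬝ᵥ A⁻¹ *ᵥ w)) := by
  rw [aux_smul_vecMulVec, Matrix.vecMulVec_eq Unit,
    Matrix.det_add_replicateCol_mul_replicateRow hA.det_pos.ne'.isUnit]
  congr 1
  rw [Matrix.mul_assoc, ← Matrix.replicateCol_mulVec, Matrix.replicateRow_mul_replicateCol, Matrix.det_unique]
  simp [Matrix.mulVec_smul, dotProduct_smul]

lemma aux_trace_eq_sum_eigenvalues {A : Matrix m m ℝ} (hA : A.IsHermitian) :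
    A.trace = ∑ i, hA.eigenvalues i := by
  simpa using hA.trace_eq_sum_eigenvalues

lemma aux_log_det_le {A : Matrix m m ℝ} (hA : A.PosDef) (hc : 0 < Fintype.card m) :
    Real.log A.det
      ≤ (Fintype.card m : ℝ) * Real.log (A.trace / (Fintype.card m : ℝ)) := by
  set c : ℝ := (Fintype.card m : ℝ) with hcdef
  have hc0 : 0 < c := by rw [hcdef]; exact_mod_cast hc
  set lam : m → ℝ := hA.isHermitian.eigenvalues with hlam
  have hlampos : ∀ i, 0 < lam i := fun i => hA.eigenvalues_pos i
  have hdet : A.det = ∏ i, lam i := by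
    simpa using hA.isHermitian.det_eq_prod_eigenvalues
  have htr : A.trace = ∑ i, lam i := aux_trace_eq_sum_eigenvalues hA.isHermitian
  have hgm := Real.geom_mean_le_arith_mean_weighted univ (fun _ => c⁻¹) lam
    (fun _ _ => by positivity)
    (by simp [Finset.card_univ]; field_simp; exact hcdef.symm)
    (fun i _ => (hlampos i).le)
  have hprodpos : 0 < ∏ i, lam i ^ (c⁻¹ : ℝ) :=
    Finset.prod_pos fun i _ => Real.rpow_pos_of_pos (hlampos i) _
  have hlog := Real.log_le_log hprodpos hgm
  have hlhs : Real.log (∏ i, lam i ^ (c⁻¹ : ℝ)) = c⁻¹ * ∑ i, Real.log (lam i) := by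
    rw [Real.log_prod (fun i _ => (Real.rpow_pos_of_pos (hlampos i) _).ne')]
    rw [Finset.mul_sum]
    exact Finset.sum_congr rfl fun i _ => Real.log_rpow (hlampos i) _
  have hrhs : ∑ i, c⁻¹ * lam i = A.trace / c := by
    rw [htr, ← Finset.mul_sum]; ring
  rw [hlhs, hrhs] at hlog
  have hld : Real.log A.det = ∑ i, Real.log (lam i) := by
    rw [hdet, Real.log_prod (fun i _ => (hlampos i).ne')]
  rw [hld]
  calc ∑ i, Real.log (lam i) = c * (c⁻¹ * ∑ i, Real.log (lam i)) := by
        field_simp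
    _ ≤ c * Real.log (A.trace / c) := by
        apply mul_le_mul_of_nonneg_left hlog hc0.le

lemma aux_trace_vecMulVec (w : m → ℝ) :
    (Matrix.vecMulVec w w).trace = w ⬝ᵥ w := by
  simp [Matrix.trace, Matrix.diag, Matrix.vecMulVec, dotProduct]

lemma aux_x_le_log (x c : ℝ) (hx : 0 ≤ x) (hxc : x ≤ c) :
    x ≤ (1 + c) * Real.log (1 + x) := by
  have h1x : 0 < 1 + x := by linarith
  have hlog : 1 - (1 + x)⁻¹ ≤ Real.log (1 + x) := by
    have := Real.log_le_sub_one_of_pos (show (0:ℝ) < (1 + x)⁻¹ by positivity)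
    rw [Real.log_inv] at this
    linarith
  have hfrac : x / (1 + x) = 1 - (1 + x)⁻¹ := by field_simp; ring
  have h2 : x / (1 + x) ≤ Real.log (1 + x) := by rw [hfrac]; exact hlog
  have hlognn : 0 ≤ Real.log (1 + x) := Real.log_nonneg (by linarith)
  have hid : (1 + x) * (x / (1 + x)) = x := by field_simp
  have h3 : (1 + x) * (x / (1 + x)) ≤ (1 + x) * Real.log (1 + x) :=
    mul_le_mul_of_nonneg_left h2 h1x.le
  have h4 : (1 + x) * Real.log (1 + x) ≤ (1 + c) * Real.log (1 + x) :=
    mul_le_mul_of_nonneg_right (by linarith) hlognn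
  linarith

end Aux

theorem centered_leverage_score_decay {d n N : ℕ} (hd : 0 < d) (hn : 0 < n)
    (φ : Fin N → Fin d → ℝ) (φbar : Fin d → ℝ) (q : Fin N → ℝ) (qmin : ℝ)
    (hqmin : 0 < qmin) (hq : ∀ i, qmin ≤ q i) (hq1 : ∀ i, q i ≤ 1)
    (v : Fin N → Fin d → ℝ)
    (hvdef : ∀ i, v i = fun j => Real.sqrt (q i) * (φ i j - φbar j))
    (L γ α κ ρ : ℝ) (hL : ∀ i, ∑ j, v i j ^ 2 ≤ L)
    (hγ : 0 < γ) (hα : 0 < α) (hκ : 1 ≤ κ) (hρ0 : 0 < ρ) (hρ1 : ρ ≤ 1)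
    (idx : Fin n → Fin N)
    (H : Fin (n + 1) → Matrix (Fin d) (Fin d) ℝ)
    (hH : ∀ k : Fin (n + 1),
        H k = γ • (1 : Matrix (Fin d) (Fin d) ℝ)
          + α • ∑ t ∈ Finset.univ.filter (fun t : Fin n => (t : ℕ) < (k : ℕ)),
              Matrix.vecMulVec (v (idx t)) (v (idx t)))
    (hdiv : ∀ i, ∀ k : Fin n,
        v i ⬝ᵥ (H k.castSucc)⁻¹ *ᵥ v i
          ≤ κ * (v (idx k) ⬝ᵥ (H k.castSucc)⁻¹ *ᵥ v (idx k)))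
    (Sn : Matrix (Fin d) (Fin d) ℝ) (hSpd : Sn.PosDef)
    (hfc : (Sn - ρ • H (Fin.last n)).PosSemidef) :
    ∀ i, (φ i - φbar) ⬝ᵥ Sn⁻¹ *ᵥ (φ i - φbar)
      ≤ (κ / (ρ * qmin)) * ((1 + α * L / γ) / α) * ((d : ℝ) / n)
          * Real.log (1 + α * n * L / (γ * d)) := by
  -- setup
  have hd' : (0:ℝ) < d := by exact_mod_cast hd
  have hn' : (0:ℝ) < n := by exact_mod_cast hn
  set w : Fin n → Fin d → ℝ := fun t => v (idx t) with hw
  have hpsdsum : ∀ s : Finset (Fin n),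
      (∑ t ∈ s, Matrix.vecMulVec (w t) (w t)).PosSemidef := fun s =>
    Finset.sum_induction _ _ (fun a b ha hb => ha.add hb) Matrix.PosSemidef.zero
      (fun t _ => aux_psd_vecMulVec (w t))
  have hHpd : ∀ k : Fin (n+1), (H k).PosDef := by
    intro k; rw [hH k]
    exact (aux_smul_one_posDef hγ).add_posSemidef (aux_psd_smul hα.le (hpsdsum _))
  have hγIpd : (γ • (1 : Matrix (Fin d) (Fin d) ℝ)).PosDef := aux_smul_one_posDef hγ
  have hdiff : ∀ j k : Fin (n+1), (j:ℕ) ≤ (k:ℕ) → (H k - H j).PosSemidef := by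
    intro j k hjk
    have hsub : Finset.univ.filter (fun t : Fin n => (t:ℕ) < (j:ℕ))
        ⊆ Finset.univ.filter (fun t : Fin n => (t:ℕ) < (k:ℕ)) := by
      intro t ht
      simp only [Finset.mem_filter, Finset.mem_univ, true_and] at *
      exact lt_of_lt_of_le ht hjk
    have hsum := Finset.sum_sdiff (f := fun t => Matrix.vecMulVec (w t) (w t)) hsub
    have hdec : H k - H j
        = α • ∑ t ∈ (Finset.univ.filter (fun t : Fin n => (t:ℕ) < (k:ℕ)))
            \ (Finset.univ.filter (fun t : Fin n => (t:ℕ) < (j:ℕ))),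
            Matrix.vecMulVec (w t) (w t) := by
      rw [hH k, hH j, ← hsum, smul_add]
      abel
    rw [hdec]
    exact aux_psd_smul hα.le (hpsdsum _)
  have hγle : ∀ k : Fin (n+1), (H k - γ • (1 : Matrix (Fin d) (Fin d) ℝ)).PosSemidef := by
    intro k
    have : H k - γ • (1 : Matrix (Fin d) (Fin d) ℝ)
        = α • ∑ t ∈ Finset.univ.filter (fun t : Fin n => (t:ℕ) < (k:ℕ)),
            Matrix.vecMulVec (w t) (w t) := by
      rw [hH k]; abel
    rw [this]
    exact aux_psd_smul hα.le (hpsdsum _)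
  have hstep : ∀ k : Fin n,
      H k.succ = H k.castSucc + α • Matrix.vecMulVec (w k) (w k) := by
    intro k
    rw [hH k.succ, hH k.castSucc]
    have hfil : Finset.univ.filter (fun t : Fin n => (t:ℕ) < ((k.succ : Fin (n+1)):ℕ))
        = insert k (Finset.univ.filter (fun t : Fin n => (t:ℕ) < ((k.castSucc : Fin (n+1)):ℕ))) := by
      ext t
      simp only [Finset.mem_filter, Finset.mem_univ, true_and, Finset.mem_insert,
        Fin.val_succ, Fin.coe_castSucc, Nat.lt_succ_iff_lt_or_eq, Fin.ext_iff]
      tauto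
    rw [hfil, Finset.sum_insert (by simp), smul_add]
    abel
  -- elliptic potential quantities
  set e : Fin n → ℝ := fun k => w k ⬝ᵥ (H k.castSucc)⁻¹ *ᵥ w k with he
  have henn : ∀ k, 0 ≤ e k := fun k =>
    aux_quad_nonneg (hHpd k.castSucc).inv.posSemidef _
  have hL0 : 0 ≤ L :=
    le_trans (Finset.sum_nonneg fun j _ => sq_nonneg _) (hL (idx ⟨0, hn⟩))
  have hww : ∀ t : Fin n, w t ⬝ᵥ w t ≤ L := fun t => by
    simpa [dotProduct, sq] using hL (idx t)
  have hwwnn : ∀ t : Fin n, 0 ≤ w t ⬝ᵥ w t := fun t =>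
    Finset.sum_nonneg fun j _ => mul_self_nonneg _
  have heL : ∀ k, e k ≤ L / γ := by
    intro k
    have h1 : e k ≤ w k ⬝ᵥ (γ • (1 : Matrix (Fin d) (Fin d) ℝ))⁻¹ *ᵥ w k :=
      aux_inv_mono hγIpd (hHpd k.castSucc) (hγle k.castSucc) (w k)
    have h2 : w k ⬝ᵥ (γ • (1 : Matrix (Fin d) (Fin d) ℝ))⁻¹ *ᵥ w k
        = γ⁻¹ * (w k ⬝ᵥ w k) := by
      rw [aux_smul_inv hγ Matrix.PosDef.one, inv_one, Matrix.smul_mulVec,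
        Matrix.one_mulVec, dotProduct_smul, smul_eq_mul]
    rw [h2] at h1
    calc e k ≤ γ⁻¹ * (w k ⬝ᵥ w k) := h1
      _ ≤ γ⁻¹ * L := mul_le_mul_of_nonneg_left (hww k) (by positivity)
      _ = L / γ := by ring
  have hminlt : ∀ j : ℕ, min j n < n + 1 := fun j => Nat.lt_succ_of_le (min_le_right _ _)
  set F : ℕ → ℝ := fun j => Real.log ((H ⟨min j n, hminlt j⟩).det) with hF
  have hdetpos : ∀ k : Fin (n+1), 0 < (H k).det := fun k => (hHpd k).det_pos
  have hFstep : ∀ k : Fin n, Real.log (1 + α * e k) = F ((k:ℕ)+1) - F (k:ℕ) := by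
    intro k
    have h1 : (⟨min ((k:ℕ)+1) n, hminlt _⟩ : Fin (n+1)) = k.succ := by
      apply Fin.ext
      simp [Nat.min_eq_left (Nat.succ_le_of_lt k.isLt)]
    have h2 : (⟨min (k:ℕ) n, hminlt _⟩ : Fin (n+1)) = k.castSucc := by
      apply Fin.ext
      simp [Nat.min_eq_left (le_of_lt k.isLt)]
    have hdet : (H k.succ).det = (H k.castSucc).det * (1 + α * e k) := by
      rw [hstep k]; exact aux_det_rank_one (hHpd k.castSucc) α (w k)
    have hpos1 : 0 < 1 + α * e k :=
      add_pos_of_pos_of_nonneg one_pos (mul_nonneg hα.le (henn k))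
    simp only [hF]
    rw [h1, h2, hdet, Real.log_mul (hdetpos _).ne' hpos1.ne']
    ring
  have htel : ∑ k : Fin n, Real.log (1 + α * e k) = F n - F 0 := by
    rw [Finset.sum_congr rfl (fun k _ => hFstep k)]
    rw [Fin.sum_univ_eq_sum_range (fun j => F (j+1) - F j) n]
    exact Finset.sum_range_sub F n
  have hF0 : F 0 = d * Real.log γ := by
    have h0fin : (⟨min 0 n, hminlt 0⟩ : Fin (n+1)) = 0 := by apply Fin.ext; simp
    have hH0 : H 0 = γ • (1 : Matrix (Fin d) (Fin d) ℝ) := by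
      rw [hH 0]
      have hf : Finset.univ.filter (fun t : Fin n => (t:ℕ) < ((0 : Fin (n+1)):ℕ)) = ∅ := by
        apply Finset.filter_false_of_mem; intro t _; simp
      rw [hf]
      simp
    simp only [hF]
    rw [h0fin, hH0, Matrix.det_smul, Matrix.det_one, mul_one, Fintype.card_fin, Real.log_pow]
  have hFn : F n = Real.log ((H (Fin.last n)).det) := by
    have hnfin : (⟨min n n, hminlt n⟩ : Fin (n+1)) = Fin.last n := by apply Fin.ext; simp
    simp only [hF]
    rw [hnfin]
  have hfiln : Finset.univ.filter
      (fun t : Fin n => (t:ℕ) < ((Fin.last n : Fin (n+1)):ℕ)) = Finset.univ := by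
    apply Finset.filter_true_of_mem; intro t _; simpa using t.isLt
  have htr_eq : (H (Fin.last n)).trace = γ * d + α * ∑ t : Fin n, (w t ⬝ᵥ w t) := by
    rw [hH (Fin.last n), hfiln, Matrix.trace_add, Matrix.trace_smul, Matrix.trace_smul,
      Matrix.trace_one, Matrix.trace_sum,
      Finset.sum_congr rfl fun t _ => aux_trace_vecMulVec (w t)]
    simp [Fintype.card_fin]
  have htrace : (H (Fin.last n)).trace ≤ γ * d + α * (n * L) := by
    rw [htr_eq]
    have h1 : ∑ t : Fin n, (w t ⬝ᵥ w t) ≤ n * L := by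
      calc ∑ t : Fin n, (w t ⬝ᵥ w t) ≤ ∑ _t : Fin n, L :=
            Finset.sum_le_sum fun t _ => hww t
        _ = n * L := by simp [Finset.sum_const, nsmul_eq_mul]
    nlinarith
  have htrpos : 0 < (H (Fin.last n)).trace := by
    rw [htr_eq]
    have h1 : 0 ≤ ∑ t : Fin n, (w t ⬝ᵥ w t) := Finset.sum_nonneg fun t _ => hwwnn t
    nlinarith
  set D : ℝ := (d:ℝ) * Real.log (1 + α * n * L / (γ * d)) with hD
  have hFnF0 : F n - F 0 ≤ D := by
    have h1 : F n ≤ d * Real.log ((H (Fin.last n)).trace / d) := by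
      rw [hFn]
      have := aux_log_det_le (hHpd (Fin.last n)) (by simpa [Fintype.card_fin] using hd)
      simpa [Fintype.card_fin] using this
    have h2 : Real.log ((H (Fin.last n)).trace / d)
        ≤ Real.log ((γ * d + α * (n * L)) / d) := by
      apply Real.log_le_log (by positivity)
      gcongr
    have h3 : Real.log ((γ * d + α * (n * L)) / d)
        = Real.log γ + Real.log (1 + α * n * L / (γ * d)) := by
      rw [← Real.log_mul hγ.ne' (by positivity : (0:ℝ) < 1 + α * n * L / (γ * d)).ne']
      congr 1
      field_simp
    have h4 := mul_le_mul_of_nonneg_left h2 hd'.le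
    rw [hF0, hD]
    rw [h3] at h4
    nlinarith [h1, h4]
  set S : ℝ := ∑ k : Fin n, e k with hS
  have hSnn : 0 ≤ S := Finset.sum_nonneg fun k _ => henn k
  have hc1 : 0 < 1 + α * L / γ := by positivity
  have hαS : α * S ≤ (1 + α * L / γ) * D := by
    have h1 : ∀ k : Fin n, α * e k ≤ (1 + α * L / γ) * Real.log (1 + α * e k) := by
      intro k
      apply aux_x_le_log (α * e k) (α * L / γ) (mul_nonneg hα.le (henn k))
      calc α * e k ≤ α * (L / γ) := mul_le_mul_of_nonneg_left (heL k) hα.le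
        _ = α * L / γ := by ring
    calc α * S = ∑ k : Fin n, α * e k := by rw [hS, Finset.mul_sum]
      _ ≤ ∑ k : Fin n, (1 + α * L / γ) * Real.log (1 + α * e k) :=
          Finset.sum_le_sum fun k _ => h1 k
      _ = (1 + α * L / γ) * (F n - F 0) := by rw [← Finset.mul_sum, htel]
      _ ≤ (1 + α * L / γ) * D := mul_le_mul_of_nonneg_left hFnF0 hc1.le
  have hSle : S ≤ ((1 + α * L / γ) / α) * D := by
    rw [div_mul_eq_mul_div, le_div_iff₀ hα, mul_comm]
    exact hαS
  -- per-candidate chain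
  intro i
  have hqi : 0 < q i := lt_of_lt_of_le hqmin (hq i)
  have hvsm : v i = Real.sqrt (q i) • (φ i - φbar) := by
    funext j
    rw [hvdef i]
    simp
  have hquad : v i ⬝ᵥ Sn⁻¹ *ᵥ v i
      = q i * ((φ i - φbar) ⬝ᵥ Sn⁻¹ *ᵥ (φ i - φbar)) := by
    rw [hvsm, smul_dotProduct, Matrix.mulVec_smul, dotProduct_smul]
    simp only [smul_eq_mul]
    rw [← mul_assoc, Real.mul_self_sqrt hqi.le]
  have hρH : (ρ • H (Fin.last n)).PosDef := aux_smul_posDef hρ0 (hHpd _)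
  have step1 : v i ⬝ᵥ Sn⁻¹ *ᵥ v i
      ≤ ρ⁻¹ * (v i ⬝ᵥ (H (Fin.last n))⁻¹ *ᵥ v i) := by
    have h := aux_inv_mono hρH hSpd hfc (v i)
    rwa [aux_smul_inv hρ0 (hHpd _), Matrix.smul_mulVec, dotProduct_smul,
      smul_eq_mul] at h
  have hY : 0 ≤ v i ⬝ᵥ (H (Fin.last n))⁻¹ *ᵥ v i :=
    aux_quad_nonneg (hHpd _).inv.posSemidef _
  have hX : 0 ≤ v i ⬝ᵥ Sn⁻¹ *ᵥ v i := aux_quad_nonneg hSpd.inv.posSemidef _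
  have step2 : (n:ℝ) * (v i ⬝ᵥ (H (Fin.last n))⁻¹ *ᵥ v i) ≤ κ * S := by
    have h1 : ∀ k : Fin n, v i ⬝ᵥ (H (Fin.last n))⁻¹ *ᵥ v i ≤ κ * e k := by
      intro k
      have hmono := aux_inv_mono (hHpd k.castSucc) (hHpd (Fin.last n))
        (hdiff k.castSucc (Fin.last n) (by simp))
        (v i)
      exact le_trans hmono (hdiv i k)
    calc (n:ℝ) * (v i ⬝ᵥ (H (Fin.last n))⁻¹ *ᵥ v i)
        = ∑ _k : Fin n, (v i ⬝ᵥ (H (Fin.last n))⁻¹ *ᵥ v i) := by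
          simp [Finset.sum_const, nsmul_eq_mul]
      _ ≤ ∑ k : Fin n, κ * e k := Finset.sum_le_sum fun k _ => h1 k
      _ = κ * S := by rw [hS, Finset.mul_sum]
  have step2' : v i ⬝ᵥ (H (Fin.last n))⁻¹ *ᵥ v i ≤ κ * S / n := by
    rw [le_div_iff₀ hn', mul_comm]
    exact step2
  have hκ0 : (0:ℝ) ≤ κ := le_trans zero_le_one hκ
  have hLHS : (φ i - φbar) ⬝ᵥ Sn⁻¹ *ᵥ (φ i - φbar)
      = (v i ⬝ᵥ Sn⁻¹ *ᵥ v i) / q i := by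
    rw [hquad]
    field_simp
  rw [hLHS]
  calc (v i ⬝ᵥ Sn⁻¹ *ᵥ v i) / q i
      ≤ (v i ⬝ᵥ Sn⁻¹ *ᵥ v i) / qmin := by gcongr; exact hq i
    _ ≤ (ρ⁻¹ * (v i ⬝ᵥ (H (Fin.last n))⁻¹ *ᵥ v i)) / qmin := by
        gcongr
    _ ≤ (ρ⁻¹ * (κ * S / n)) / qmin := by
        gcongr
    _ ≤ (ρ⁻¹ * (κ * (((1 + α * L / γ) / α) * D) / n)) / qmin := by
        gcongr
    _ = (κ / (ρ * qmin)) * ((1 + α * L / γ) / α) * ((d : ℝ) / n)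
          * Real.log (1 + α * n * L / (γ * d)) := by
        rw [hD]
        field_simp
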